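/- Let G be a finite group, p a prime, N a normal p-subgroup of G, and x ∈ G a p-element. Then N ≤ Sub_G(x) and Sub_{G/N}(xN) = Sub_G(x)/N. -/

import Mathlib

variable {G : Type*} [Group G]

/-- `A` is subnormal in `B`: there is a chain `A = s 0 ⊴ s 1 ⊴ ⋯ ⊴ s n = B`. -/
def IsSubnormalIn (A B : Subgroup G) : Prop :=
  ∃ (n : ℕ) (s : ℕ → Subgroup G), s 0 = A ∧ s n = B ∧
    ∀ i < n, s i ≤ s (i + 1) ∧ ∀ g ∈ s (i + 1), ∀ a ∈ s i, g * a * g⁻¹ ∈ s i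

/-- The subnormaliser `Sub_G(x)` of an element `x`. -/
def subnormalizer (x : G) : Subgroup G :=
  Subgroup.closure
    {g : G | IsSubnormalIn (Subgroup.zpowers x) (Subgroup.closure {g, x})}

namespace IsSubnormalIn

lemma map {G' : Type*} [Group G'] (f : G →* G') {A B : Subgroup G}
    (h : IsSubnormalIn A B) : IsSubnormalIn (A.map f) (B.map f) := by
  obtain ⟨n, s, h0, hn, hstep⟩ := h
  refine ⟨n, fun i => (s i).map f, ?_, ?_, fun i hi => ?_⟩
  · show (s 0).map f = A.map f; rw [h0]
  · show (s n).map f = B.map f; rw [hn]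
  refine ⟨Subgroup.map_mono (hstep i hi).1, ?_⟩
  rintro g hg a ha
  rw [Subgroup.mem_map] at hg ha ⊢
  obtain ⟨g', hg', rfl⟩ := hg
  obtain ⟨a', ha', rfl⟩ := ha
  exact ⟨g' * a' * g'⁻¹, (hstep i hi).2 g' hg' a' ha', by simp⟩

lemma comap {G' : Type*} [Group G'] (f : G' →* G) {A B : Subgroup G}
    (h : IsSubnormalIn A B) : IsSubnormalIn (A.comap f) (B.comap f) := by
  obtain ⟨n, s, h0, hn, hstep⟩ := h
  refine ⟨n, fun i => (s i).comap f, ?_, ?_, fun i hi => ?_⟩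
  · show (s 0).comap f = A.comap f; rw [h0]
  · show (s n).comap f = B.comap f; rw [hn]
  refine ⟨Subgroup.comap_mono (hstep i hi).1, ?_⟩
  intro g hg a ha
  simp only [Subgroup.mem_comap, map_mul, map_inv] at hg ha ⊢
  exact (hstep i hi).2 _ hg _ ha

lemma trans {A B C : Subgroup G} (hAB : IsSubnormalIn A B) (hBC : IsSubnormalIn B C) :
    IsSubnormalIn A C := by
  obtain ⟨n1, s1, h10, h1n, h1step⟩ := hAB
  obtain ⟨n2, s2, h20, h2n, h2step⟩ := hBC
  refine ⟨n1 + n2, fun i => if i ≤ n1 then s1 i else s2 (i - n1), ?_, ?_, fun i hi => ?_⟩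
  · show (if (0 : ℕ) ≤ n1 then s1 0 else s2 (0 - n1)) = A
    rw [if_pos (Nat.zero_le _), h10]
  · show (if n1 + n2 ≤ n1 then s1 (n1 + n2) else s2 (n1 + n2 - n1)) = C
    by_cases h : n2 = 0
    · subst h; rw [if_pos (by omega)]
      simpa [h1n] using (h2n ▸ h20).symm
    · rw [if_neg (by omega), show n1 + n2 - n1 = n2 by omega, h2n]
  · show (if i ≤ n1 then s1 i else s2 (i - n1)) ≤ (if i + 1 ≤ n1 then s1 (i + 1) else s2 (i + 1 - n1)) ∧
      ∀ g ∈ (if i + 1 ≤ n1 then s1 (i + 1) else s2 (i + 1 - n1)),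
        ∀ a ∈ (if i ≤ n1 then s1 i else s2 (i - n1)),
          g * a * g⁻¹ ∈ (if i ≤ n1 then s1 i else s2 (i - n1))
    by_cases h : i + 1 ≤ n1
    · rw [if_pos (by omega), if_pos h]
      exact h1step i (by omega)
    · by_cases h' : i ≤ n1
      · have hi1 : i = n1 := by omega
        subst hi1
        rw [if_pos le_rfl, if_neg h, show i + 1 - i = 1 by omega, h1n, ← h20]
        exact h2step 0 (by omega)
      · rw [if_neg h', if_neg h, show i + 1 - n1 = (i - n1) + 1 by omega]
        exact h2step (i - n1) (by omega)

lemma of_le_of_le {A B C : Subgroup G} (h : IsSubnormalIn A B) (hAC : A ≤ C) (hCB : C ≤ B) :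
    IsSubnormalIn A C := by
  obtain ⟨n, s, h0, hn, hstep⟩ := h
  refine ⟨n, fun i => s i ⊓ C, ?_, ?_, fun i hi => ?_⟩
  · show s 0 ⊓ C = A; rw [h0, inf_eq_left.mpr hAC]
  · show s n ⊓ C = C; rw [hn, inf_eq_right.mpr hCB]
  refine ⟨inf_le_inf_right C (hstep i hi).1, ?_⟩
  intro g hg a ha
  rw [Subgroup.mem_inf] at hg ha ⊢
  exact ⟨(hstep i hi).2 g hg.1 a ha.1, C.mul_mem (C.mul_mem hg.2 ha.2) (C.inv_mem hg.2)⟩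

lemma card_lt_card {K : Type*} [Group K] [Finite K] {H H' : Subgroup K} (h : H < H') :
    Nat.card H < Nat.card H' := by
  rw [← SetLike.coe_ssubset_coe] at h
  have := Set.ncard_lt_ncard h (Set.toFinite _)
  rwa [← Nat.card_coe_set_eq, ← Nat.card_coe_set_eq] at this

lemma of_normalizerCondition {K : Type*} [Group K] [Finite K]
    (hnc : NormalizerCondition K) (H : Subgroup K) : IsSubnormalIn H ⊤ := by
  set s : ℕ → Subgroup K := fun i => (fun K' : Subgroup K => Subgroup.normalizer (K' : Set K))^[i] H with hs
  have hsucc : ∀ i, s (i + 1) = Subgroup.normalizer (s i : Set K) := by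
    intro i; simp [hs, Function.iterate_succ_apply']
  have key : ∀ i, s i = ⊤ ∨ i < Nat.card (s i) := by
    intro i
    induction i with
    | zero => right; exact Nat.card_pos
    | succ i ih =>
      rcases ih with h | h
      · left; rw [hsucc, h]; exact Subgroup.normalizer_eq_top_iff.mpr inferInstance
      · by_cases htop : s i = ⊤
        · left; rw [hsucc, htop]; exact Subgroup.normalizer_eq_top_iff.mpr inferInstance
        · right
          have hlt : s i < s (i + 1) := by
            rw [hsucc]; exact hnc _ (lt_top_iff_ne_top.mpr htop)
          have := card_lt_card hlt
          omega
  have htop : s (Nat.card K) = ⊤ := by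
    rcases key (Nat.card K) with h | h
    · exact h
    · have hle : Nat.card (s (Nat.card K)) ≤ Nat.card K := Subgroup.card_le_card_group _
      omega
  refine ⟨Nat.card K, s, rfl, htop, fun i hi => ?_⟩
  rw [hsucc]
  exact ⟨Subgroup.le_normalizer, fun g hg a ha => (Subgroup.mem_normalizer_iff.mp hg a).mp ha⟩

end IsSubnormalIn

/-- In a finite `p`-group (viewed as a subgroup `K` of `G`), every subgroup is subnormal. -/
lemma isSubnormalIn_of_isPGroup [Fintype G] {p : ℕ} (hp : p.Prime) {K H : Subgroup G}
    (hK : IsPGroup p K) (hHK : H ≤ K) : IsSubnormalIn H K := by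
  haveI : Fact p.Prime := ⟨hp⟩
  haveI := hK.isNilpotent
  have hnc : NormalizerCondition K := normalizerCondition_of_isNilpotent
  have := (IsSubnormalIn.of_normalizerCondition hnc (H.subgroupOf K)).map K.subtype
  rwa [Subgroup.subgroupOf_map_subtype, inf_eq_left.mpr hHK,
    ← MonoidHom.range_eq_map, Subgroup.range_subtype] at this

theorem stmt_15 [Fintype G] {p : ℕ} (hp : p.Prime)
    (N : Subgroup G) [N.Normal] (hN : IsPGroup p N)
    (x : G) (hx : ∃ k : ℕ, orderOf x = p ^ k) :
    N ≤ subnormalizer x ∧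
      subnormalizer ((x : G ⧸ N)) =
        (subnormalizer x).map (QuotientGroup.mk' N) := by
  obtain ⟨k, hk⟩ := hx
  have hzx : IsPGroup p (Subgroup.zpowers x) :=
    IsPGroup.of_card (by rw [Nat.card_zpowers, hk])
  have hKp : IsPGroup p (Subgroup.zpowers x ⊔ N : Subgroup G) :=
    IsPGroup.to_sup_of_normal_right hzx hN
  have hbase : IsSubnormalIn (Subgroup.zpowers x) (Subgroup.zpowers x ⊔ N) :=
    isSubnormalIn_of_isPGroup hp hKp le_sup_left
  have hxmem : ∀ g : G, Subgroup.zpowers x ≤ Subgroup.closure {g, x} := fun g =>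
    Subgroup.zpowers_le.mpr (Subgroup.subset_closure (by simp))
  have hkey : ∀ g : G,
      IsSubnormalIn (Subgroup.zpowers x ⊔ N) (Subgroup.closure {g, x} ⊔ N) →
      g ∈ subnormalizer x := fun g h =>
    Subgroup.subset_closure ((hbase.trans h).of_le_of_le (hxmem g) le_sup_left)
  constructor
  · intro n hn
    have hC : Subgroup.closure {n, x} ≤ Subgroup.zpowers x ⊔ N := by
      refine (Subgroup.closure_le _).mpr ?_
      rintro y (rfl | rfl)
      · exact Subgroup.mem_sup_right hn
      · exact Subgroup.mem_sup_left (Subgroup.mem_zpowers _)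
    exact Subgroup.subset_closure (hbase.of_le_of_le (hxmem n) hC)
  · set π := QuotientGroup.mk' N with hπ
    have hπx : π x = (x : G ⧸ N) := rfl
    apply le_antisymm
    · refine (Subgroup.closure_le _).mpr ?_
      rintro y hy
      obtain ⟨g, rfl⟩ := QuotientGroup.mk'_surjective N y
      simp only [Set.mem_setOf_eq] at hy
      have hc := hy.comap π
      rw [← hπx, ← MonoidHom.map_zpowers, Subgroup.comap_map_eq, QuotientGroup.ker_mk'] at hc
      have himg : Subgroup.closure {π g, π x} = (Subgroup.closure {g, x}).map π := by
        rw [MonoidHom.map_closure, Set.image_pair]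
      rw [himg, Subgroup.comap_map_eq, QuotientGroup.ker_mk'] at hc
      exact ⟨g, hkey g hc, rfl⟩
    · rw [subnormalizer, MonoidHom.map_closure]
      refine Subgroup.closure_mono ?_
      rintro y ⟨g, hg, rfl⟩
      simp only [Set.mem_setOf_eq] at hg ⊢
      have := hg.map π
      rwa [MonoidHom.map_zpowers, MonoidHom.map_closure, Set.image_pair, hπx] at this
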